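/- Let P_B(n, ε) be a family of functions [0,1] → [0,1], nonincreasing in ε being lowered (i.e., nondecreasing in ε), and suppose there is ν > 0 and a continuous strictly decreasing surjection f : ℝ → (0,1) such that P_B(n, ε_n) → f(z) whenever n^{1/ν}(ε* − ε_n) → z ∈ ℝ. Then for every p ∈ (0,1) the finite-length threshold ε_p(n) := sup{ε : P_B(n, ε) ≤ p} satisfies n^{1/ν}(ε* − ε_p(n)) → f^{−1}(p) as n → ∞. -/

import Mathlib

open Filter Set Topology

/-- if `P_B(n,·)` maps `[0,1]` to `[0,1]`, is nondecreasing in `ε`, and obeys the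
scaling law `P_B(n, ε_n) → f(z)` whenever `n^{1/ν}(ε* − ε_n) → z`, with `f : ℝ → (0,1)` a
continuous strictly decreasing surjection onto `(0,1)`, then for every `p ∈ (0,1)` the
finite-length threshold `ε_p(n) = sup{ε ∈ [0,1] : P_B(n,ε) ≤ p}` satisfies
`n^{1/ν}(ε* − ε_p(n)) → f⁻¹(p)`. -/
theorem finite_length_threshold_scaling
    (PB : ℕ → ℝ → ℝ) (ν εstar : ℝ) (f : ℝ → ℝ)
    (hν : 0 < ν) (hεstar : εstar ∈ Set.Ioo (0:ℝ) 1)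
    (hrange : ∀ n, ∀ ε ∈ Set.Icc (0:ℝ) 1, PB n ε ∈ Set.Icc (0:ℝ) 1)
    (hmono : ∀ n, MonotoneOn (PB n) (Set.Icc (0:ℝ) 1))
    (hf_cont : Continuous f) (hf_anti : StrictAnti f)
    (hf_into : ∀ z, f z ∈ Set.Ioo (0:ℝ) 1)
    (hf_onto : ∀ y ∈ Set.Ioo (0:ℝ) 1, ∃ z, f z = y)
    (hscaling : ∀ z : ℝ, ∀ εseq : ℕ → ℝ,
      Tendsto (fun n : ℕ => (n : ℝ) ^ (1/ν) * (εstar - εseq n)) atTop (nhds z) →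
      Tendsto (fun n : ℕ => PB n (εseq n)) atTop (nhds (f z)))
    (p : ℝ) (hp : p ∈ Set.Ioo (0:ℝ) 1) (z : ℝ) (hz : f z = p) :
    Tendsto (fun n : ℕ => (n : ℝ) ^ (1/ν) *
        (εstar - sSup {ε | ε ∈ Set.Icc (0:ℝ) 1 ∧ PB n ε ≤ p})) atTop (nhds z) := by
  have hν' : 0 < 1/ν := by positivity
  have hpow : Tendsto (fun n : ℕ => (n:ℝ) ^ (1/ν)) atTop atTop :=
    (tendsto_rpow_atTop hν').comp tendsto_natCast_atTop_atTop
  have key : ∀ c : ℝ,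
      Tendsto (fun n : ℕ => PB n (εstar - c * ((n:ℝ) ^ (1/ν))⁻¹)) atTop (nhds (f c))
      ∧ ∀ᶠ n : ℕ in atTop, εstar - c * ((n:ℝ) ^ (1/ν))⁻¹ ∈ Set.Ioo (0:ℝ) 1 := by
    intro c
    have hinv : Tendsto (fun n : ℕ => ((n:ℝ) ^ (1/ν))⁻¹) atTop (nhds 0) :=
      hpow.inv_tendsto_atTop
    have heps : Tendsto (fun n : ℕ => εstar - c * ((n:ℝ) ^ (1/ν))⁻¹) atTop (nhds εstar) := by
      have h2 := (hinv.const_mul c)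
      have h3 : Tendsto (fun n : ℕ => εstar - c * ((n:ℝ) ^ (1/ν))⁻¹) atTop
          (nhds (εstar - c * 0)) := tendsto_const_nhds.sub h2
      simpa using h3
    constructor
    · apply hscaling c
      have hevc : ∀ᶠ n : ℕ in atTop,
          c = (n:ℝ) ^ (1/ν) * (εstar - (εstar - c * ((n:ℝ) ^ (1/ν))⁻¹)) := by
        filter_upwards [eventually_ge_atTop 1] with n hn
        have hpos : (0:ℝ) < (n:ℝ) ^ (1/ν) := by
          apply Real.rpow_pos_of_pos
          exact_mod_cast Nat.pos_of_ne_zero (by omega)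
        field_simp
        ring
      exact Tendsto.congr' hevc tendsto_const_nhds
    · exact heps.eventually (Ioo_mem_nhds hεstar.1 hεstar.2)
  rw [tendsto_order]
  constructor
  · intro a ha
    set c := (a + z)/2 with hc
    have hcz : c < z := by simp [hc]; linarith
    have hac : a < c := by simp [hc]; linarith
    obtain ⟨hPB, hmem⟩ := key c
    have hfp : p < f c := hz ▸ hf_anti hcz
    have hev : ∀ᶠ n in atTop, p < PB n (εstar - c * ((n:ℝ) ^ (1/ν))⁻¹) :=
      hPB.eventually_const_lt hfp
    filter_upwards [hev, hmem, eventually_ge_atTop 1] with n hn hmemn hn1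
    set e := εstar - c * ((n:ℝ) ^ (1/ν))⁻¹ with he
    have hpos : (0:ℝ) < (n:ℝ) ^ (1/ν) := by
      apply Real.rpow_pos_of_pos
      exact_mod_cast Nat.pos_of_ne_zero (by omega)
    have hub : ∀ x ∈ {ε | ε ∈ Set.Icc (0:ℝ) 1 ∧ PB n ε ≤ p}, x ≤ e := by
      intro x hx
      by_contra hlt
      push_neg at hlt
      have hmle := hmono n (Set.mem_Icc_of_Ioo hmemn) hx.1 hlt.le
      exact absurd (lt_of_lt_of_le hn hmle) (not_lt.2 hx.2)
    have hsup : sSup {ε | ε ∈ Set.Icc (0:ℝ) 1 ∧ PB n ε ≤ p} ≤ e :=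
      Real.sSup_le hub (le_of_lt hmemn.1)
    have hceq : c = (n:ℝ)^(1/ν) * (εstar - e) := by
      rw [he]; field_simp; ring
    calc a < c := hac
    _ = (n:ℝ)^(1/ν) * (εstar - e) := hceq
    _ ≤ _ := by
        apply mul_le_mul_of_nonneg_left (by linarith) hpos.le
  · intro a ha
    set c := (z + a)/2 with hc
    have hzc : z < c := by simp [hc]; linarith
    have hca : c < a := by simp [hc]; linarith
    obtain ⟨hPB, hmem⟩ := key c
    have hfp : f c < p := hz ▸ hf_anti hzc
    have hev : ∀ᶠ n in atTop, PB n (εstar - c * ((n:ℝ) ^ (1/ν))⁻¹) < p :=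
      hPB.eventually_lt_const hfp
    filter_upwards [hev, hmem, eventually_ge_atTop 1] with n hn hmemn hn1
    set e := εstar - c * ((n:ℝ) ^ (1/ν))⁻¹ with he
    have hpos : (0:ℝ) < (n:ℝ) ^ (1/ν) := by
      apply Real.rpow_pos_of_pos
      exact_mod_cast Nat.pos_of_ne_zero (by omega)
    have hein : e ∈ {ε | ε ∈ Set.Icc (0:ℝ) 1 ∧ PB n ε ≤ p} :=
      ⟨Set.mem_Icc_of_Ioo hmemn, hn.le⟩
    have hbdd : BddAbove {ε | ε ∈ Set.Icc (0:ℝ) 1 ∧ PB n ε ≤ p} :=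
      ⟨1, fun x hx => hx.1.2⟩
    have hsup : e ≤ sSup {ε | ε ∈ Set.Icc (0:ℝ) 1 ∧ PB n ε ≤ p} :=
      le_csSup hbdd hein
    have hceq : c = (n:ℝ)^(1/ν) * (εstar - e) := by
      rw [he]; field_simp; ring
    calc (n:ℝ) ^ (1/ν) * (εstar - sSup {ε | ε ∈ Set.Icc (0:ℝ) 1 ∧ PB n ε ≤ p})
        ≤ (n:ℝ)^(1/ν) * (εstar - e) :=
          mul_le_mul_of_nonneg_left (by linarith) hpos.le
    _ = c := hceq.symm
    _ < a := hca
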